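/- arXiv:1209.6277 — 2 statements merged into one kernel-verified Lean document; each statement's English description precedes it below -/
import Mathlib

section
/- The average sensitivity of any nested canalizing function f with k ≥ 1 relevant variables satisfies k/2^{k-1} ≤ as(f) ≤ 4/3 - 2^{-k} - (1/3)·2^{-k}·(-1)^k. -/
open Finset

/-- Sign encoding of a Boolean value: `true ↦ 1`, `false ↦ -1`. -/
def bsign (a : Bool) : ℝ := if a then 1 else -1

/-- The character `χ_U(x) = ∏_{i ∈ U} x_i` (inputs encoded as Booleans). -/
def chi {n : ℕ} (U : Finset (Fin n)) (x : Fin n → Bool) : ℝ :=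
  ∏ i ∈ U, bsign (x i)

/-- Fourier coefficient `f̂(U) = 2^{-n} ∑_x f(x) χ_U(x)`. -/
noncomputable def fhat {n : ℕ} (f : (Fin n → Bool) → ℝ) (U : Finset (Fin n)) : ℝ :=
  (∑ x : Fin n → Bool, f x * chi U x) / 2 ^ n

/-- `f` is a (±1-valued) Boolean function. -/
def IsBoolean {n : ℕ} (f : (Fin n → Bool) → ℝ) : Prop := ∀ x, f x = 1 ∨ f x = -1

/-- Restriction `f^{(i,a)}` of `f` obtained by fixing the `i`-th input to `a`. -/
def restrict {n : ℕ} (f : (Fin n → Bool) → ℝ) (i : Fin n) (a : Bool) :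
    (Fin n → Bool) → ℝ :=
  fun x => f (Function.update x i a)

/-- Variable `i` is relevant for `f`. -/
def relevant {n : ℕ} (f : (Fin n → Bool) → ℝ) (i : Fin n) : Prop :=
  ∃ x, f x ≠ f (Function.update x i (!(x i)))

/-- Number of relevant variables of `f`. -/
noncomputable def numRel {n : ℕ} (f : (Fin n → Bool) → ℝ) : ℕ :=
  Nat.card {i : Fin n // relevant f i}

/-- Influence `I_i(f) = Pr[f(X) ≠ f(X ⊕ e_i)]` for uniform `X`. -/
noncomputable def influence {n : ℕ} (f : (Fin n → Bool) → ℝ) (i : Fin n) : ℝ :=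
  (Nat.card {x : Fin n → Bool // f x ≠ f (Function.update x i (!(x i)))} : ℝ) / 2 ^ n

/-- Average sensitivity `as(f) = ∑_i I_i(f)`. -/
noncomputable def avgSens {n : ℕ} (f : (Fin n → Bool) → ℝ) : ℝ :=
  ∑ i : Fin n, influence f i

/-- `IsNCFwith f L` : `f` is a nested canalizing function with the nested canalizing
structure recorded by the list `L` of triples `(π(j), α_j, β_j)`: fixing variable
`π(j)` to its canalizing value `α_j` forces the output `β_j`, and the restriction to
the non-canalizing value continues with the rest of the list; the base case is a
constant (±1) function. -/
inductive IsNCFwith : {n : ℕ} → ((Fin n → Bool) → ℝ) → List (Fin n × Bool × ℝ) → Prop where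
  | const {n : ℕ} (f : (Fin n → Bool) → ℝ) (b : ℝ) (hb : b = 1 ∨ b = -1)
      (h : ∀ x, f x = b) : IsNCFwith f []
  | step {n : ℕ} (f : (Fin n → Bool) → ℝ) (i : Fin n) (a : Bool) (b : ℝ)
      (hb : b = 1 ∨ b = -1) (L : List (Fin n × Bool × ℝ))
      (hrel : relevant f i)
      (hcan : ∀ x, x i = a → f x = b)
      (hrest : IsNCFwith (restrict f i (!a)) L) :
      IsNCFwith f ((i, a, b) :: L)

/-- `f` is a nested canalizing function. -/
def IsNCF {n : ℕ} (f : (Fin n → Bool) → ℝ) : Prop := ∃ L, IsNCFwith f L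

/-- Variable `i` is most dominant: some nested canalizing ordering starts with `i`. -/
def MostDominant {n : ℕ} (f : (Fin n → Bool) → ℝ) (i : Fin n) : Prop :=
  ∃ a b L, IsNCFwith f ((i, a, b) :: L)

/-- The canalized output values `β_1, β_2, …` recorded in `L` alternate in sign. -/
def AltBetas {n : ℕ} (L : List (Fin n × Bool × ℝ)) : Prop :=
  List.Chain' (fun p q : Fin n × Bool × ℝ => q.2.2 = -p.2.2) L

section NCFaux
open Function
variable {n : ℕ}
variable {n : ℕ}
noncomputable def cnt (P : (Fin n → Bool) → Prop) : ℕ := Nat.card {x // P x}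

lemma cnt_congr {P Q : (Fin n → Bool) → Prop} (h : ∀ x, P x ↔ Q x) : cnt P = cnt Q :=
  Nat.card_congr (Equiv.subtypeEquivRight h)

lemma cnt_false : cnt (n := n) (fun _ => False) = 0 := by
  simp [cnt]

lemma cnt_true : cnt (n := n) (fun _ => True) = 2 ^ n := by
  rw [cnt, Nat.card_eq_fintype_card, Fintype.card_subtype]
  simp [Fintype.card_fun]

lemma cnt_add_compl (P : (Fin n → Bool) → Prop) :
    cnt P + cnt (fun x => ¬ P x) = 2 ^ n := by
  classical
  have := Nat.card_congr (Equiv.sumCompl P)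
  rw [Nat.card_sum] at this
  simp only [cnt]
  rw [this, Nat.card_eq_fintype_card]
  simp [Fintype.card_fun]

lemma cnt_le (P : (Fin n → Bool) → Prop) : cnt P ≤ 2 ^ n := by
  have := cnt_add_compl P; omega

lemma cnt_or_disjoint {P Q : (Fin n → Bool) → Prop} (h : ∀ x, ¬ (P x ∧ Q x)) :
    cnt (fun x => P x ∨ Q x) = cnt P + cnt Q := by
  classical
  have e := subtypeOrEquiv P Q (by
    rw [Pi.disjoint_iff]; intro x
    simp only [Prop.disjoint_iff]
    tauto)
  rw [cnt, Nat.card_congr e, Nat.card_sum]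
  rfl

lemma bool_eq_or (b c : Bool) : b = c ∨ b = !c := by cases b <;> cases c <;> simp

lemma cnt_flip_equiv (i : Fin n) (c : Bool) {Q : (Fin n → Bool) → Prop}
    (hQ : ∀ x v, Q (Function.update x i v) ↔ Q x) :
    cnt (fun x => x i = c ∧ Q x) = cnt (fun x => x i = !c ∧ Q x) := by
  refine Nat.card_congr ⟨fun p => ⟨Function.update p.1 i (!c), by simp, (hQ _ _).2 p.2.2⟩,
    fun p => ⟨Function.update p.1 i c, by simp, (hQ _ _).2 p.2.2⟩, ?_, ?_⟩
  · rintro ⟨x, hx, hq⟩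
    simp only [Subtype.mk.injEq]
    rw [Function.update_idem, ← hx, Function.update_eq_self]
  · rintro ⟨x, hx, hq⟩
    simp only [Subtype.mk.injEq]
    rw [Function.update_idem, ← hx, Function.update_eq_self]

lemma cnt_half (i : Fin n) (c : Bool) {Q : (Fin n → Bool) → Prop}
    (hQ : ∀ x v, Q (Function.update x i v) ↔ Q x) :
    cnt Q = 2 * cnt (fun x => x i = c ∧ Q x) := by
  have h1 : cnt Q = cnt (fun x => (x i = c ∧ Q x) ∨ (x i = !c ∧ Q x)) := by
    apply cnt_congr
    intro x
    rcases bool_eq_or (x i) c with h | h <;> simp [h] <;> tauto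
  rw [h1, cnt_or_disjoint (by rintro x ⟨⟨h1, -⟩, ⟨h2, -⟩⟩; rw [h1] at h2; simp at h2),
    cnt_flip_equiv i c hQ]
  ring

noncomputable def Pneq (f : (Fin n → Bool) → ℝ) (c : ℝ) : ℝ :=
  (cnt (fun x => f x ≠ c) : ℝ) / 2 ^ n

lemma influence_eq_cnt (f : (Fin n → Bool) → ℝ) (i : Fin n) :
    influence f i = (cnt (fun x => f x ≠ f (Function.update x i (!(x i)))) : ℝ) / 2 ^ n := rfl

variable {f : (Fin n → Bool) → ℝ} {i : Fin n} {a : Bool} {b : ℝ}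

lemma restrict_apply (x : Fin n → Bool) :
    _root_.restrict f i (!a) x = f (Function.update x i (!a)) := rfl

lemma restrict_update (v : Bool) (x : Fin n → Bool) :
    _root_.restrict f i (!a) (Function.update x i v) = _root_.restrict f i (!a) x := by
  simp [_root_.restrict, Function.update_idem]

lemma restrict_eq_self {x : Fin n → Bool} (h : x i = !a) : _root_.restrict f i (!a) x = f x := by
  rw [restrict_apply, ← h, Function.update_eq_self]

-- influence of the canalizing variable
lemma influence_can (hcan : ∀ x, x i = a → f x = b) :
    influence f i = Pneq (_root_.restrict f i (!a)) b := by
  rw [influence_eq_cnt, Pneq]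
  congr 1
  norm_cast
  apply cnt_congr
  intro x
  rw [restrict_apply]
  rcases bool_eq_or (x i) a with h | h
  · rw [hcan x h, h]
    exact ne_comm
  · have h1 : f (Function.update x i (!a)) = f x := by rw [← h, Function.update_eq_self]
    have h2 : f (Function.update x i (!(x i))) = b := by
      apply hcan; simp [h]
    rw [h1, h2]

-- influence of restricted function at i is 0
lemma influence_restrict_self : influence (_root_.restrict f i (!a)) i = 0 := by
  rw [influence_eq_cnt]
  have h0 : cnt (fun x => _root_.restrict f i (!a) x ≠
      _root_.restrict f i (!a) (Function.update x i (!(x i)))) = 0 := by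
    rw [cnt_congr (Q := fun _ => False) ?_, cnt_false]
    intro x
    simp [restrict_update]
  rw [h0]; simp

-- influence of other variables halves
lemma influence_other (hcan : ∀ x, x i = a → f x = b) {j : Fin n} (hj : j ≠ i) :
    influence f j = influence (_root_.restrict f i (!a)) j / 2 := by
  set g := _root_.restrict f i (!a) with hg
  have ginv : ∀ (x : Fin n → Bool) v, g (Function.update x i v) = g x := fun x v =>
    restrict_update v x
  have hQ : ∀ (x : Fin n → Bool) v, (g (Function.update x i v) ≠
      g (Function.update (Function.update x i v) j (!(Function.update x i v j)))) ↔
      (g x ≠ g (Function.update x j (!(x j)))) := by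
    intro x v
    rw [Function.update_of_ne hj, Function.update_comm (Ne.symm hj), ginv, ginv]
  rw [influence_eq_cnt, influence_eq_cnt]
  have key : cnt (fun x => f x ≠ f (Function.update x j (!(x j)))) =
      cnt (fun x => x i = !a ∧ g x ≠ g (Function.update x j (!(x j)))) := by
    apply cnt_congr
    intro x
    rcases bool_eq_or (x i) a with h | h
    · have h1 : f x = b := hcan x h
      have h2 : f (Function.update x j (!(x j))) = b := by
        apply hcan; rw [Function.update_of_ne (Ne.symm hj), h]
      rw [h1, h2]
      simp only [ne_eq, not_true_eq_false, false_iff, not_and]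
      intro hx; rw [h] at hx; simp at hx
    · have h1 : f x = g x := (restrict_eq_self h).symm
      have h2 : f (Function.update x j (!(x j))) = g (Function.update x j (!(x j))) := by
        refine (restrict_eq_self ?_).symm
        rw [Function.update_of_ne (Ne.symm hj), h]
      rw [h1, h2]
      simp [h]
  rw [key]
  have h2 : cnt (fun x => g x ≠ g (Function.update x j (!(x j)))) =
      2 * cnt (fun x => x i = !a ∧ g x ≠ g (Function.update x j (!(x j)))) :=
    cnt_half i (!a) hQ
  rw [h2]
  push_cast
  ring

lemma avgSens_nonneg (f : (Fin n → Bool) → ℝ) : 0 ≤ avgSens f := by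
  apply Finset.sum_nonneg
  intro j _
  rw [influence_eq_cnt]
  positivity

lemma Pneq_nonneg (f : (Fin n → Bool) → ℝ) (c : ℝ) : 0 ≤ Pneq f c := by
  rw [Pneq]; positivity

lemma Pneq_le_one (f : (Fin n → Bool) → ℝ) (c : ℝ) : Pneq f c ≤ 1 := by
  rw [Pneq]
  rw [div_le_one (by positivity)]
  calc ((cnt fun x => f x ≠ c) : ℝ) ≤ ((2 ^ n : ℕ) : ℝ) := by exact_mod_cast cnt_le _
  _ = 2 ^ n := by push_cast; ring

lemma avgSens_step (hcan : ∀ x, x i = a → f x = b) :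
    avgSens f = Pneq (_root_.restrict f i (!a)) b + avgSens (_root_.restrict f i (!a)) / 2 := by
  set g := _root_.restrict f i (!a) with hg
  have h1 : avgSens f = influence f i + ∑ j ∈ {i}ᶜ, influence f j :=
    (Fintype.sum_eq_add_sum_compl i _)
  have h2 : avgSens g = influence g i + ∑ j ∈ {i}ᶜ, influence g j :=
    (Fintype.sum_eq_add_sum_compl i _)
  rw [influence_restrict_self, zero_add] at h2
  rw [h1, influence_can hcan, h2, Finset.sum_div]
  congr 1
  apply Finset.sum_congr rfl
  intro j hj
  exact influence_other hcan (Finset.mem_compl.1 hj |> fun h => by simpa using h)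

lemma Pneq_step_eq (hcan : ∀ x, x i = a → f x = b) {c : ℝ} (hbc : b = c) :
    Pneq f c = Pneq (_root_.restrict f i (!a)) c / 2 := by
  set g := _root_.restrict f i (!a) with hg
  have ginv : ∀ (x : Fin n → Bool) v, g (Function.update x i v) = g x := fun x v =>
    restrict_update v x
  have key : cnt (fun x => f x ≠ c) = cnt (fun x => x i = !a ∧ g x ≠ c) := by
    apply cnt_congr
    intro x
    rcases bool_eq_or (x i) a with h | h
    · rw [hcan x h, hbc]
      simp only [ne_eq, not_true_eq_false, false_iff, not_and]
      intro hx; rw [h] at hx; simp at hx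
    · rw [← (restrict_eq_self h : g x = f x)]
      simp [h]
      exact Iff.rfl
  have h2 : cnt (fun x => g x ≠ c) = 2 * cnt (fun x => x i = !a ∧ g x ≠ c) :=
    cnt_half i (!a) (by intro x v; rw [ginv])
  rw [Pneq, Pneq, key, h2]
  push_cast
  ring

lemma Pneq_step_ne (hcan : ∀ x, x i = a → f x = b) {c : ℝ} (hbc : b ≠ c) :
    Pneq f c = 1 / 2 + Pneq (_root_.restrict f i (!a)) c / 2 := by
  set g := _root_.restrict f i (!a) with hg
  have ginv : ∀ (x : Fin n → Bool) v, g (Function.update x i v) = g x := fun x v =>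
    restrict_update v x
  have key : cnt (fun x => f x ≠ c) =
      cnt (fun x => (x i = a ∧ True) ∨ (x i = !a ∧ g x ≠ c)) := by
    apply cnt_congr
    intro x
    rcases bool_eq_or (x i) a with h | h
    · rw [hcan x h]
      have : ¬ x i = !a := by rw [h]; simp
      simp [h, this, hbc]
    · rw [← (restrict_eq_self h : g x = f x)]
      have : ¬ x i = a := by rw [h]; simp
      simp [h, this]
      exact Iff.rfl
  have hdisj : ∀ (x : Fin n → Bool), ¬ ((x i = a ∧ True) ∧ (x i = !a ∧ g x ≠ c)) := by
    rintro x ⟨⟨h1, -⟩, ⟨h2, -⟩⟩; rw [h1] at h2; simp at h2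
  have htrue : 2 * cnt (fun x : Fin n → Bool => x i = a ∧ True) = 2 ^ n := by
    rw [← cnt_half i a (by simp), cnt_true]
  have h2 : cnt (fun x => g x ≠ c) = 2 * cnt (fun x => x i = !a ∧ g x ≠ c) :=
    cnt_half i (!a) (by intro x v; rw [ginv])
  have e1 : ((cnt fun x : Fin n → Bool => x i = a ∧ True) : ℝ) = 2 ^ n / 2 := by
    have : ((2 : ℝ)) * ((cnt fun x : Fin n → Bool => x i = a ∧ True) : ℝ) = 2 ^ n := by
      exact_mod_cast congrArg (Nat.cast : ℕ → ℝ) htrue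
    linarith
  have e2 : ((cnt fun x => x i = !a ∧ g x ≠ c) : ℝ) = ((cnt fun x => g x ≠ c) : ℝ) / 2 := by
    have : ((cnt fun x => g x ≠ c) : ℝ) = 2 * ((cnt fun x => x i = !a ∧ g x ≠ c) : ℝ) := by
      exact_mod_cast congrArg (Nat.cast : ℕ → ℝ) h2
    linarith
  rw [Pneq, Pneq, key, cnt_or_disjoint hdisj, Nat.cast_add, e1, e2]
  have hn : (0:ℝ) < 2 ^ n := by positivity
  generalize ((cnt fun x => g x ≠ c : ℕ) : ℝ) = X
  field_simp

lemma Pneq_const {d : ℝ} (hconst : ∀ x, f x = d) {c : ℝ} (hdc : d ≠ c) : Pneq f c = 1 := by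
  rw [Pneq, cnt_congr (Q := fun _ => True) (fun x => by simp [hconst x, hdc]), cnt_true]
  push_cast
  field_simp

lemma Pneq_compl (hbool : IsBoolean f) (hb : b = 1 ∨ b = -1) :
    Pneq f b + Pneq f (-b) = 1 := by
  have key : ∀ x, (f x ≠ -b) ↔ ¬ (f x ≠ b) := by
    intro x
    rcases hbool x with h | h <;> rcases hb with h' | h' <;>
      simp [h, h'] <;> norm_num
  rw [Pneq, Pneq, cnt_congr key, ← add_div]
  have := cnt_add_compl (fun x => f x ≠ b)
  rw [show ((cnt fun x => f x ≠ b) : ℝ) + (cnt fun x => ¬ f x ≠ b : ℕ) = ((2:ℝ))^n by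
    exact_mod_cast congrArg (Nat.cast : ℕ → ℝ) this]
  · field_simp

lemma avgSens_const {d : ℝ} (hconst : ∀ x, f x = d) : avgSens f = 0 := by
  rw [avgSens]
  apply Finset.sum_eq_zero
  intro j _
  rw [influence_eq_cnt, cnt_congr (Q := fun _ => False) (fun x => by simp [hconst]), cnt_false]
  simp

-- NCF structural lemmas
lemma isBoolean_of_NCF {L : List (Fin n × Bool × ℝ)} {f : (Fin n → Bool) → ℝ}
    (h : IsNCFwith f L) : IsBoolean f := by
  induction h with
  | const f b hb hc => intro x; rw [hc x]; exact hb
  | step f i a b hb L hrel hcan hrest IH =>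
    intro x
    rcases bool_eq_or (x i) a with h | h
    · rw [hcan x h]; exact hb
    · have h1 : _root_.restrict f i (!a) x = f x := restrict_eq_self h
      rw [← h1]
      exact IH _

lemma base_ne {d : ℝ} (hrel : relevant f i) (hcan : ∀ x, x i = a → f x = b)
    (hconst : ∀ x, _root_.restrict f i (!a) x = d) : d ≠ b := by
  intro hdb
  have hfconst : ∀ x, f x = b := by
    intro x
    rcases bool_eq_or (x i) a with h | h
    · exact hcan x h
    · have h1 : _root_.restrict f i (!a) x = f x := restrict_eq_self h
      rw [← h1, hconst x, hdb]
  obtain ⟨x, hx⟩ := hrel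
  exact hx (by rw [hfconst, hfconst])

lemma not_relevant_restrict : ¬ relevant (_root_.restrict f i (!a)) i := by
  rintro ⟨x, hx⟩
  exact hx (restrict_update _ _).symm

lemma relevant_iff (hcan : ∀ x, x i = a → f x = b) {j : Fin n} (hj : j ≠ i) :
    relevant f j ↔ relevant (_root_.restrict f i (!a)) j := by
  set g := _root_.restrict f i (!a) with hg
  have ginv : ∀ (x : Fin n → Bool) v, g (Function.update x i v) = g x := fun x v =>
    restrict_update v x
  constructor
  · rintro ⟨x, hx⟩
    have hxi : x i = !a := by
      rcases bool_eq_or (x i) a with h | h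
      · exfalso
        apply hx
        rw [hcan x h]
        exact (hcan _ (by rw [Function.update_of_ne (Ne.symm hj), h])).symm
      · exact h
    refine ⟨x, ?_⟩
    have h1 : g x = f x := restrict_eq_self hxi
    have h2 : g (Function.update x j (!(x j))) = f (Function.update x j (!(x j))) :=
      restrict_eq_self (by rw [Function.update_of_ne (Ne.symm hj), hxi])
    rw [h1, h2]
    exact hx
  · rintro ⟨x, hx⟩
    refine ⟨Function.update x i (!a), ?_⟩
    have e0 : Function.update x i (!a) j = x j := Function.update_of_ne hj _ _
    have h1 : f (Function.update x i (!a)) = g (Function.update x i (!a)) :=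
      (restrict_eq_self (by simp)).symm
    have h2 : f (Function.update (Function.update x i (!a)) j (!(x j))) =
        g (Function.update (Function.update x i (!a)) j (!(x j))) :=
      (restrict_eq_self (by rw [Function.update_of_ne (Ne.symm hj)]; simp)).symm
    rw [e0, h1, h2, ginv, Function.update_comm (Ne.symm hj), ginv]
    exact hx

lemma numRel_const {d : ℝ} (hconst : ∀ x, f x = d) : numRel f = 0 := by
  rw [numRel, Nat.card_eq_zero]
  left
  constructor
  rintro ⟨j, x, hx⟩
  exact hx (by rw [hconst, hconst])

lemma numRel_step (hrel : relevant f i) (hcan : ∀ x, x i = a → f x = b) :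
    numRel f = numRel (_root_.restrict f i (!a)) + 1 := by
  set g := _root_.restrict f i (!a) with hg
  have hset : {j | relevant f j} = insert i {j | relevant g j} := by
    ext j
    by_cases hj : j = i
    · subst hj
      simp [hrel]
    · simp only [Set.mem_insert_iff, Set.mem_setOf_eq, hj, false_or]
      exact relevant_iff hcan hj
  have h1 : numRel f = Set.ncard {j | relevant f j} := (Nat.card_coe_set_eq _).symm
  have h2 : numRel g = Set.ncard {j | relevant g j} := (Nat.card_coe_set_eq _).symm
  rw [h1, h2, hset, Set.ncard_insert_of_notMem (by exact not_relevant_restrict)]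

noncomputable def Mb (k : ℕ) : ℝ := 4 / 3 - 1 / 2 ^ k - (1 / 3) * (1 / 2 ^ k) * (-1 : ℝ) ^ k

lemma Mb_zero : Mb 0 = 0 := by norm_num [Mb]

lemma Mb_one : Mb 1 = 1 := by norm_num [Mb]

lemma Mb_mono (k : ℕ) : Mb k ≤ Mb (k + 1) := by
  have hp : (0:ℝ) < 2 ^ k := by positivity
  have e : (1:ℝ)/(2^k*2) = (1/2^k)/2 := by ring
  have ht : (0:ℝ) ≤ 1/2^k := by positivity
  rcases Nat.even_or_odd k with h | h
  · rw [Mb, Mb, h.neg_one_pow, pow_succ, (Even.add_one h).neg_one_pow, e]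
    linarith
  · rw [Mb, Mb, h.neg_one_pow, pow_succ, (Odd.add_one h).neg_one_pow, e]
    linarith
lemma Mb_step2 (k : ℕ) : 1 + Mb k / 4 = Mb (k + 2) := by
  have hp : (0:ℝ) < 2 ^ k := by positivity
  rw [Mb, Mb, pow_add, pow_add]
  push_cast
  field_simp
  ring

theorem numRel_eq {n : ℕ} {f : (Fin n → Bool) → ℝ} {L : List (Fin n × Bool × ℝ)}
    (h : IsNCFwith f L) : numRel f = L.length := by
  induction h with
  | const f d hd hc => simp [numRel_const hc]
  | step f i a b hb L hrel hcan hrest IH =>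
    rw [numRel_step hrel hcan, IH]
    rfl

theorem UB {n : ℕ} {f : (Fin n → Bool) → ℝ} {L : List (Fin n × Bool × ℝ)}
    (h : IsNCFwith f L) :
    (∀ c : ℝ, c = 1 ∨ c = -1 → Pneq f c + avgSens f / 2 ≤ Mb (L.length + 1)) ∧
    avgSens f ≤ Mb L.length := by
  induction h with
  | const f d hd hc =>
    constructor
    · intro c _
      rw [avgSens_const hc]
      simp only [List.length_nil, zero_add, Mb_one]
      have := Pneq_le_one f c
      linarith
    · rw [avgSens_const hc, List.length_nil, Mb_zero]
  | step f i a b hb L hrel hcan hrest IH =>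
    have hgb : IsBoolean (_root_.restrict f i (!a)) := isBoolean_of_NCF hrest
    have hstep := avgSens_step (f := f) (i := i) (a := a) (b := b) hcan
    have hasg := avgSens_nonneg (_root_.restrict f i (!a))
    have hasgM : avgSens (_root_.restrict f i (!a)) ≤ Mb L.length := IH.2
    have hmain : ∀ c : ℝ, c = 1 ∨ c = -1 →
        Pneq f c + avgSens f / 2 ≤ Mb (L.length + 2) := by
      intro c hc
      by_cases hbc : b = c
      · rw [Pneq_step_eq hcan hbc, hstep, ← hbc]
        have h1 := IH.1 b hb
        have h2 := Mb_mono (L.length + 1)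
        linarith
      · have hcb : c = -b := by rcases hb with h' | h' <;> rcases hc with h'' | h'' <;> simp_all
        have hcompl := Pneq_compl hgb hb
        rw [Pneq_step_ne hcan hbc, hstep, hcb]
        have h3 := Mb_step2 L.length
        linarith
    constructor
    · intro c hc
      have := hmain c hc
      simpa [List.length_cons] using this
    · rw [hstep]
      have h1 := IH.1 b hb
      simp only [List.length_cons]
      linarith

theorem LB {n : ℕ} {f : (Fin n → Bool) → ℝ} {L : List (Fin n × Bool × ℝ)}
    (h : IsNCFwith f L) :
    2 * (L.length : ℝ) ≤ 2 ^ L.length * avgSens f ∧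
    (L ≠ [] → ∀ c : ℝ, 1 / 2 ^ L.length ≤ Pneq f c) := by
  induction h with
  | const f d hd hc =>
    refine ⟨by rw [avgSens_const hc]; simp, fun h => absurd rfl h⟩
  | step f i a b hb L hrel hcan hrest IH =>
    have hstep := avgSens_step (f := f) (i := i) (a := a) (b := b) hcan
    have hasg := avgSens_nonneg (_root_.restrict f i (!a))
    have hp : (0:ℝ) < 2 ^ L.length := by positivity
    have hPb : 1 / 2 ^ L.length ≤ Pneq (_root_.restrict f i (!a)) b := by
      cases hL' : L with
      | nil =>
        subst hL'
        cases hrest with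
        | const g d hd hconst =>
          rw [Pneq_const hconst (base_ne hrel hcan hconst)]
          norm_num
      | cons p L' =>
        subst hL'
        exact IH.2 (by simp) b
    constructor
    · simp only [List.length_cons]
      push_cast
      rw [hstep]
      have expand : (2:ℝ) ^ (L.length + 1) * (Pneq (_root_.restrict f i (!a)) b +
          avgSens (_root_.restrict f i (!a)) / 2) =
          2 * ((2:ℝ) ^ L.length * Pneq (_root_.restrict f i (!a)) b) +
          (2 ^ L.length * avgSens (_root_.restrict f i (!a))) := by
        rw [pow_succ]; ring
      rw [expand]
      have h3 : (1:ℝ) ≤ 2 ^ L.length * Pneq (_root_.restrict f i (!a)) b := by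
        have := mul_le_mul_of_nonneg_left hPb hp.le
        rw [show (2:ℝ) ^ L.length * (1 / 2 ^ L.length) = 1 by field_simp] at this
        exact this
      have h4 := IH.1
      linarith
    · intro _ c
      simp only [List.length_cons]
      by_cases hbc : b = c
      · rw [Pneq_step_eq hcan hbc, ← hbc, pow_succ]
        rw [show (1:ℝ) / (2 ^ L.length * 2) = (1 / 2 ^ L.length) / 2 by ring]
        linarith
      · rw [Pneq_step_ne hcan hbc]
        have h5 : (1:ℝ) / 2 ^ (L.length + 1) ≤ 1 / 2 := by
          apply one_div_le_one_div_of_le (by norm_num)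
          calc (2:ℝ) = 2 ^ 1 := by norm_num
          _ ≤ 2 ^ (L.length + 1) := by
            apply pow_le_pow_right₀ (by norm_num)
            omega
        have h6 := Pneq_nonneg (_root_.restrict f i (!a)) c
        linarith


end NCFaux

/-- Tight bounds on the average sensitivity of an NCF with `k ≥ 1` relevant variables. -/
theorem avgSens_ncf_bounds {n : ℕ} (f : (Fin n → Bool) → ℝ)
    (hf : IsNCF f) (k : ℕ) (hk : numRel f = k) (h1 : 1 ≤ k) :
    (k : ℝ) / 2 ^ (k - 1) ≤ avgSens f ∧
    avgSens f ≤ 4 / 3 - 1 / 2 ^ k - (1 / 3) * (1 / 2 ^ k) * (-1 : ℝ) ^ k := by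
  obtain ⟨L, hL⟩ := hf
  have hlen : L.length = k := by rw [← numRel_eq hL, hk]
  subst hlen
  constructor
  · obtain ⟨m, hm⟩ : ∃ m, L.length = m + 1 := ⟨L.length - 1, by omega⟩
    have hlb := (LB hL).1
    rw [hm, pow_succ] at hlb
    have hp : (0:ℝ) < 2 ^ m := by positivity
    rw [hm, show (m + 1 - 1) = m by omega, div_le_iff₀ hp]
    push_cast at hlb ⊢
    nlinarith [avgSens_nonneg f]
  · have := (UB hL).2
    rw [Mb] at this
    exact this
end

section
/- If f is a nested canalizing function with k > 1 relevant variables in which all relevant variables are most dominant, then |f̂(S)| = 2^{-(k-1)} for every nonempty S ⊆ rel(f), and |f̂(∅)| = 1 - 2^{-(k-1)}. -/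
open Finset

lemma ncf_boolean {n : ℕ} {f : (Fin n → Bool) → ℝ} {L : List (Fin n × Bool × ℝ)}
    (h : IsNCFwith f L) : IsBoolean f := by
  induction h with
  | const f b hb h => intro x; rw [h x]; exact hb
  | step f i a b hb L hrel hcan hrest ih =>
    intro x
    by_cases hx : x i = a
    · rw [hcan x hx]; exact hb
    · have hx' : x i = !a := by cases a <;> cases h : x i <;> simp_all
      have := ih x
      simp only [_root_.restrict] at this
      rwa [← hx', Function.update_eq_self] at this

lemma agree_relevant {n : ℕ} (f : (Fin n → Bool) → ℝ) :
    ∀ x y : Fin n → Bool, (∀ i, relevant f i → x i = y i) → f x = f y := by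
  classical
  have key : ∀ m (x y : Fin n → Bool),
      (univ.filter fun i => x i ≠ y i).card = m → (∀ i, relevant f i → x i = y i) → f x = f y := by
    intro m
    induction m with
    | zero =>
      intro x y hc _
      have : x = y := by
        funext i
        by_contra h
        have : i ∈ univ.filter fun i => x i ≠ y i := by simp [h]
        rw [card_eq_zero] at hc
        simp [hc] at this
      rw [this]
    | succ m ih =>
      intro x y hc hag
      have hne : (univ.filter fun i => x i ≠ y i).Nonempty := by
        rw [← card_pos, hc]; omega
      obtain ⟨i, hi⟩ := hne
      have hixy : x i ≠ y i := (mem_filter.mp hi).2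
      have hirr : ¬ relevant f i := fun h => hixy (hag i h)
      have hstep : ∀ z : Fin n → Bool, f z = f (Function.update z i (!(z i))) := by
        intro z; by_contra h; exact hirr ⟨z, h⟩
      set y' := Function.update y i (x i) with hy'
      have h1 : f y = f y' := by
        have := hstep y
        have hxi : x i = !(y i) := by revert hixy; cases x i <;> cases y i <;> simp
        rwa [← hxi] at this
      have h2 : (univ.filter fun j => x j ≠ y' j) = (univ.filter fun j => x j ≠ y j).erase i := by
        ext j
        rcases eq_or_ne j i with rfl | hj
        · simp [hy', Function.update_self]
        · simp [hy', Function.update_of_ne hj, hj]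
      have h3 : (univ.filter fun j => x j ≠ y' j).card = m := by
        rw [h2, card_erase_of_mem hi, hc]; omega
      have hag' : ∀ j, relevant f j → x j = y' j := by
        intro j hjr
        rcases eq_or_ne j i with rfl | hj
        · exact absurd hjr hirr
        · rw [hy', Function.update_of_ne hj]; exact hag j hjr
      rw [ih x y' h3 hag', ← h1]
  intro x y hag
  exact key _ x y rfl hag

lemma bsign_cases (v : Bool) : bsign v = 1 ∨ bsign v = -1 := by cases v <;> simp [bsign]

lemma abs_bsign (v : Bool) : |bsign v| = 1 := by cases v <;> simp [bsign]

lemma key_sum {n : ℕ} (f : (Fin n → Bool) → ℝ) (B : ℝ) (a : Fin n → Bool) (R : Finset (Fin n))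
    (hfval : ∀ x : Fin n → Bool, f x = (if ∀ i ∈ R, x i = !(a i) then -B else B))
    (S : Finset (Fin n)) (hS : S ⊆ R) :
    ∑ x : Fin n → Bool, f x * chi S x
      = (if S = ∅ then B * 2 ^ n else 0)
        - 2 * B * (∏ i ∈ S, bsign (!(a i))) * 2 ^ (n - R.card) := by
  classical
  -- pointwise decomposition
  have step1 : ∀ x : Fin n → Bool, f x * chi S x
      = B * chi S x + (-2 * B) * ((∏ i ∈ R, (if x i = !(a i) then (1:ℝ) else 0)) * chi S x) := by
    intro x
    by_cases hx : ∀ i ∈ R, x i = !(a i)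
    · rw [hfval x, if_pos hx, Finset.prod_eq_one (fun i hi => if_pos (hx i hi))]; ring
    · push_neg at hx
      obtain ⟨i, hiR, hxi⟩ := hx
      rw [hfval x, if_neg (by push_neg; exact ⟨i, hiR, hxi⟩),
        Finset.prod_eq_zero hiR (show (if x i = !(a i) then (1:ℝ) else 0) = 0 from if_neg hxi)]
      ring
  simp only [step1]
  rw [Finset.sum_add_distrib, ← Finset.mul_sum, ← Finset.mul_sum]
  -- sum of characters
  have hA : ∑ x : Fin n → Bool, chi S x = if S = ∅ then (2:ℝ) ^ n else 0 := by
    rcases eq_or_ne S ∅ with rfl | hSne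
    · simp [chi]
    · obtain ⟨j, hj⟩ := Finset.nonempty_iff_ne_empty.mpr hSne
      have : ∀ x : Fin n → Bool, chi S x = ∏ i : Fin n, (if i ∈ S then bsign (x i) else 1) := by
        intro x
        rw [Finset.prod_ite_mem, Finset.univ_inter, chi]
      simp only [this]
      rw [← Fintype.prod_sum (fun i (v : Bool) => if i ∈ S then bsign v else 1)]
      rw [if_neg hSne]
      apply Finset.prod_eq_zero (Finset.mem_univ j)
      simp only [if_pos hj, Fintype.sum_bool, bsign]
      norm_num
  -- the cube sum
  have hB : ∑ x : Fin n → Bool, (∏ i ∈ R, (if x i = !(a i) then (1:ℝ) else 0)) * chi S x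
      = (∏ i ∈ S, bsign (!(a i))) * 2 ^ (n - R.card) := by
    have hpt : ∀ x : Fin n → Bool, (∏ i ∈ R, (if x i = !(a i) then (1:ℝ) else 0)) * chi S x
        = ∏ i : Fin n, ((if i ∈ R then (if x i = !(a i) then (1:ℝ) else 0) else 1)
            * (if i ∈ S then bsign (x i) else 1)) := by
      intro x
      rw [Finset.prod_mul_distrib, Finset.prod_ite_mem, Finset.prod_ite_mem,
        Finset.univ_inter, Finset.univ_inter, chi]
    simp only [hpt]
    rw [← Fintype.prod_sum (fun i (v : Bool) =>
      (if i ∈ R then (if v = !(a i) then (1:ℝ) else 0) else 1) * (if i ∈ S then bsign v else 1))]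
    have heval : ∀ i : Fin n,
        (∑ v : Bool, (if i ∈ R then (if v = !(a i) then (1:ℝ) else 0) else 1)
          * (if i ∈ S then bsign v else 1))
        = if i ∈ S then bsign (!(a i)) else if i ∈ R then 1 else 2 := by
      intro i
      rw [Fintype.sum_bool]
      by_cases hiS : i ∈ S
      · have hiR := hS hiS
        cases ha : a i <;> simp [hiS, hiR, bsign]
      · by_cases hiR : i ∈ R
        · cases ha : a i <;> simp [hiS, hiR, bsign]
        · norm_num [hiS, hiR]
    rw [Finset.prod_congr rfl fun i _ => heval i,
      ← Finset.prod_sdiff (Finset.subset_univ R), ← Finset.prod_sdiff hS]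
    have e1 : (∏ i ∈ Finset.univ \ R,
        (if i ∈ S then bsign (!(a i)) else if i ∈ R then (1:ℝ) else 2)) = 2 ^ (n - R.card) := by
      rw [Finset.prod_congr rfl (fun i hi => by
        have h2 := (Finset.mem_sdiff.mp hi).2
        have h3 : i ∉ S := fun h => h2 (hS h)
        rw [if_neg h3, if_neg h2] : ∀ i ∈ Finset.univ \ R, _ = (2:ℝ)),
        Finset.prod_const, Finset.card_sdiff_of_subset (Finset.subset_univ R), Finset.card_univ,
        Fintype.card_fin]
    have e2 : (∏ i ∈ R \ S,
        (if i ∈ S then bsign (!(a i)) else if i ∈ R then (1:ℝ) else 2)) = 1 :=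
      Finset.prod_eq_one fun i hi => by
        rw [if_neg (Finset.mem_sdiff.mp hi).2, if_pos (Finset.mem_sdiff.mp hi).1]
    have e3 : (∏ i ∈ S,
        (if i ∈ S then bsign (!(a i)) else if i ∈ R then (1:ℝ) else 2))
        = ∏ i ∈ S, bsign (!(a i)) :=
      Finset.prod_congr rfl fun i hi => if_pos hi
    rw [e1, e2, e3]; ring
  rw [hA, hB]
  rcases eq_or_ne S ∅ with rfl | h
  · simp; ring
  · simp [h]; ring


/-- For an NCF with `k > 1` relevant variables, all most dominant, the Fourier
coefficients on nonempty sets of relevant variables all have absolute value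
`2^{-(k-1)}`, and `|f̂(∅)| = 1 - 2^{-(k-1)}`. -/
theorem fhat_all_most_dominant {n : ℕ} (f : (Fin n → Bool) → ℝ)
    (hf : IsNCF f) (hdom : ∀ i, relevant f i → MostDominant f i)
    (k : ℕ) (hk : numRel f = k) (h1 : 1 < k) :
    (∀ S : Finset (Fin n), S ≠ ∅ → (∀ i ∈ S, relevant f i) →
      |fhat f S| = 1 / 2 ^ (k - 1)) ∧
    |fhat f ∅| = 1 - 1 / 2 ^ (k - 1) := by
  classical
  obtain ⟨L, hL⟩ := hf
  have hbool : IsBoolean f := ncf_boolean hL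
  set R : Finset (Fin n) := univ.filter (relevant f) with hR
  have hRk : R.card = k := by
    rw [hR, ← Fintype.card_subtype, ← Nat.card_eq_fintype_card]
    exact hk
  have hcard : 1 < Fintype.card {i : Fin n // relevant f i} := by
    have := hk
    rw [numRel, Nat.card_eq_fintype_card] at this
    omega
  obtain ⟨i0s, i1s, hnes⟩ := Fintype.exists_pair_of_one_lt_card hcard
  have hne01 : i0s.1 ≠ i1s.1 := fun h => hnes (Subtype.ext h)
  have hAB : ∀ i : Fin n, ∃ (a : Bool) (b : ℝ), relevant f i →
      ((b = 1 ∨ b = -1) ∧ ∀ x, x i = a → f x = b) := by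
    intro i
    by_cases hi : relevant f i
    · obtain ⟨a, b, L', hL'⟩ := hdom i hi
      cases hL' with
      | step _ _ _ _ hb _ _ hcan _ => exact ⟨a, b, fun _ => ⟨hb, hcan⟩⟩
    · exact ⟨true, 1, fun h => absurd h hi⟩
  choose a bf hab using hAB
  set B : ℝ := bf i0s.1 with hB
  have hBpm : B = 1 ∨ B = -1 := ((hab i0s.1 i0s.2).1)
  have hcommon : ∀ i, relevant f i → bf i = B := by
    intro i hi
    rcases eq_or_ne i i0s.1 with rfl | hne
    · rfl
    · set x : Fin n → Bool :=
        Function.update (Function.update (fun _ => false) i (a i)) i0s.1 (a i0s.1) with hx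
      have hxi : x i = a i := by
        rw [hx, Function.update_of_ne hne, Function.update_self]
      have hxi0 : x i0s.1 = a i0s.1 := by rw [hx, Function.update_self]
      have e1 : f x = bf i := (hab i hi).2 x hxi
      have e2 : f x = B := (hab i0s.1 i0s.2).2 x hxi0
      rw [← e1, e2]
  have hcanal : ∀ i, relevant f i → ∀ x : Fin n → Bool, x i = a i → f x = B := by
    intro i hi x hx
    rw [(hab i hi).2 x hx, hcommon i hi]
  -- value on the complement cube
  have hx0 : f (fun j => !(a j)) = -B := by
    rcases hbool (fun j => !(a j)) with h | h
    · -- if it equals B, f is constant, contradiction with relevance of i0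
      by_cases hcase : f (fun j => !(a j)) = B
      · exfalso
        have hconst : ∀ y : Fin n → Bool, f y = B := by
          intro y
          by_cases hy : ∃ i, relevant f i ∧ y i = a i
          · obtain ⟨i, hi, hyi⟩ := hy
            exact hcanal i hi y hyi
          · push_neg at hy
            have : ∀ i, relevant f i → y i = !(a i) := by
              intro i hi
              have := hy i hi
              cases h1 : y i <;> cases h2 : a i <;> simp_all
            rw [agree_relevant f y (fun j => !(a j)) this]
            exact hcase
        obtain ⟨z, hz⟩ := i0s.2
        exact hz (by rw [hconst z, hconst])
      · rcases hBpm with hB1 | hB1 <;> simp [h, hB1] at hcase ⊢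
    · by_cases hcase : f (fun j => !(a j)) = B
      · exfalso
        have hconst : ∀ y : Fin n → Bool, f y = B := by
          intro y
          by_cases hy : ∃ i, relevant f i ∧ y i = a i
          · obtain ⟨i, hi, hyi⟩ := hy
            exact hcanal i hi y hyi
          · push_neg at hy
            have : ∀ i, relevant f i → y i = !(a i) := by
              intro i hi
              have := hy i hi
              cases h1 : y i <;> cases h2 : a i <;> simp_all
            rw [agree_relevant f y (fun j => !(a j)) this]
            exact hcase
        obtain ⟨z, hz⟩ := i0s.2
        exact hz (by rw [hconst z, hconst])
      · rcases hBpm with hB1 | hB1 <;> simp [h, hB1] at hcase ⊢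
  have hfval : ∀ x : Fin n → Bool, f x = (if ∀ i ∈ R, x i = !(a i) then -B else B) := by
    intro x
    by_cases hx : ∀ i ∈ R, x i = !(a i)
    · rw [if_pos hx, ← hx0]
      apply agree_relevant
      intro i hi
      exact hx i (by simp [hR, hi])
    · rw [if_neg hx]
      push_neg at hx
      obtain ⟨i, hiR, hxi⟩ := hx
      have hirel : relevant f i := by
        have := Finset.mem_filter.mp (hR ▸ hiR)
        exact this.2
      have : x i = a i := by
        cases h1 : x i <;> cases h2 : a i <;> simp_all
      exact hcanal i hirel x this
  -- numeric facts
  have hkn : k ≤ n := by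
    rw [← hRk]
    simpa using Finset.card_le_univ R
  have h2n : (2:ℝ) ^ n = 2 ^ (n - k) * 2 ^ (k - 1) * 2 := by
    rw [mul_assoc, ← pow_succ, ← pow_add]
    congr 1
    omega
  have h2pos : (0:ℝ) < 2 ^ n := by positivity
  have hABS : |B| = 1 := by rcases hBpm with h | h <;> rw [h] <;> norm_num
  constructor
  · intro S hSne hSrel
    have hSR : S ⊆ R := by
      intro i hi
      simp [hR, hSrel i hi]
    have hks := key_sum f B a R hfval S hSR
    rw [fhat, hks, if_neg hSne, hRk]
    have habs : |∏ i ∈ S, bsign (!(a i))| = 1 := by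
      rw [Finset.abs_prod]
      exact Finset.prod_eq_one fun i _ => abs_bsign _
    rw [abs_div, abs_of_pos h2pos, zero_sub, abs_neg, abs_mul, abs_mul, abs_mul, hABS, habs]
    rw [h2n]
    norm_num
    rw [inv_eq_one_div, div_eq_div_iff (by positivity) (by positivity)]
    ring
  · have hks := key_sum f B a R hfval ∅ (Finset.empty_subset R)
    rw [fhat, hks, if_pos rfl, hRk]
    simp only [Finset.prod_empty, mul_one]
    have hfac : B * 2 ^ n - 2 * B * 2 ^ (n - k) = B * (2 ^ n - 2 * 2 ^ (n - k)) := by ring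
    have hle : 2 * (2:ℝ) ^ (n - k) ≤ 2 ^ n := by
      rw [h2n]
      have h2k : (2:ℝ) ≤ 2 ^ (k - 1) := by
        calc (2:ℝ) = 2 ^ 1 := by norm_num
        _ ≤ 2 ^ (k - 1) := by
          apply pow_le_pow_right₀ (by norm_num)
          omega
      nlinarith [pow_pos (show (0:ℝ) < 2 by norm_num) (n - k)]
    rw [hfac, abs_div, abs_of_pos h2pos, abs_mul, hABS, one_mul,
      abs_of_nonneg (sub_nonneg.mpr hle)]
    rw [h2n]
    rw [div_eq_iff (by positivity)]
    have h2k1 : (0:ℝ) < 2 ^ (k - 1) := by positivity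
    field_simp
end
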